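/- Let A : ℝ^{n₁×n₂} → ℝ^m be a linear map and let r < n₁/2. Suppose there exists a matrix Y in the null space of A and a decomposition Y = Y₁ + Y₂ with rank(Y₁) = r, rank(Y₂) > r, and ‖Y₁‖_* ≥ ‖Y₂‖_*. Then there exists b ∈ ℝ^m and matrices X₀, X₁ with A(X₀) = A(X₁) = b, rank(X₀) ≤ r, rank(X₁) > rank(X₀), and ‖X₁‖_* ≤ ‖X₀‖_*; in particular, a minimum rank solution of A(X) = b of rank at most r is not the unique minimum nuclear norm solution. -/

import Mathlib

open Matrix

/-- The nuclear norm of a real matrix: the sum of its singular values,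
i.e. the sum of the square roots of the eigenvalues of `Xᵀ * X`. -/
noncomputable def nuclearNorm {m n : Type*} [Fintype m] [Fintype n] [DecidableEq n]
    (X : Matrix m n ℝ) : ℝ :=
  ∑ i, Real.sqrt ((show (Xᵀ * X).IsHermitian by
    simpa only [conjTranspose_eq_transpose_of_trivial] using
      Matrix.isHermitian_conjTranspose_mul_self X).eigenvalues i)

lemma eig_congr {n : Type*} [Fintype n] [DecidableEq n] {M N : Matrix n n ℝ}
    (hM : M.IsHermitian) (hN : N.IsHermitian) (h : M = N) :
    hM.eigenvalues = hN.eigenvalues := by subst h; rfl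

lemma rank_neg' {m n : Type*} [Fintype m] [Fintype n] (X : Matrix m n ℝ) :
    (-X).rank = X.rank := by
  have h : (-X).mulVecLin = -X.mulVecLin := by
    ext v i; simp [Matrix.neg_mulVec]
  rw [Matrix.rank, Matrix.rank, h, LinearMap.range_neg]

lemma nuclearNorm_neg {m n : Type*} [Fintype m] [Fintype n] [DecidableEq n]
    (X : Matrix m n ℝ) : nuclearNorm (-X) = nuclearNorm X := by
  unfold nuclearNorm
  rw [eig_congr (show ((-X)ᵀ * -X).IsHermitian by
      simpa only [conjTranspose_eq_transpose_of_trivial] using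
        Matrix.isHermitian_conjTranspose_mul_self (-X))
    (show (Xᵀ * X).IsHermitian by
      simpa only [conjTranspose_eq_transpose_of_trivial] using
        Matrix.isHermitian_conjTranspose_mul_self X) (by simp)]

/-- If some null-space element admits a decomposition `Y = Y₁ + Y₂` with
`rank Y₁ = r`, `rank Y₂ > r` and `‖Y₁‖_* ≥ ‖Y₂‖_*`, then there are `b`, `X₀`, `X₁`
with `A X₀ = A X₁ = b`, `rank X₀ ≤ r < rank X₁` and `‖X₁‖_* ≤ ‖X₀‖_*`:
a minimum rank solution of rank at most `r` is not the unique minimum nuclear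
norm solution. -/
theorem stmt1 (n₁ n₂ m r : ℕ) (hr : 2 * r < n₁)
    (A : Matrix (Fin n₁) (Fin n₂) ℝ →ₗ[ℝ] (Fin m → ℝ))
    (Y Y₁ Y₂ : Matrix (Fin n₁) (Fin n₂) ℝ)
    (hY : A Y = 0) (hdec : Y = Y₁ + Y₂) (h1 : Y₁.rank = r) (h2 : r < Y₂.rank)
    (hnuc : nuclearNorm Y₂ ≤ nuclearNorm Y₁) :
    ∃ (b : Fin m → ℝ) (X₀ X₁ : Matrix (Fin n₁) (Fin n₂) ℝ),
      A X₀ = b ∧ A X₁ = b ∧ X₀.rank ≤ r ∧ X₀.rank < X₁.rank ∧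
      X₁ ≠ X₀ ∧ nuclearNorm X₁ ≤ nuclearNorm X₀ := by
  refine ⟨A Y₁, Y₁, -Y₂, rfl, ?_, h1.le, ?_, ?_, ?_⟩
  · have : A Y₁ + A Y₂ = 0 := by rw [← map_add, ← hdec, hY]
    rw [map_neg]; exact neg_eq_of_add_eq_zero_left this
  · rw [h1]; simpa [rank_neg'] using h2
  · intro h
    have : Y₁.rank = (-Y₂).rank := by rw [h]
    rw [h1, rank_neg'] at this
    omega
  · rw [nuclearNorm_neg]; exact hnuc
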